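/- Fix w ≠ v₀ and suppose each C_v has a terminal object e_v and each D_v has a terminal object preserved by q_v* and θ_v*. Then the functor i_{w*} : C_w → F sending F to the tuple with w-component F, v-component e_v for v ≠ w, and the unique structure maps into/out of terminal objects, is right adjoint to the evaluation functor i_w* : F → C_w, and the unit id → i_w* ∘ i_{w*} is an isomorphism; hence i_{w*} is fully faithful. -/

import Mathlib

open CategoryTheory Limits

universe u u₁ u₂

variable {V : Type u} (v₀ : V)
variable (C : V → Type u₁) [∀ v, Category.{u} (C v)]
variable (D : {v : V // v ≠ v₀} → Type u₂) [∀ p, Category.{u} (D p)]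
variable (q : ∀ p : {v : V // v ≠ v₀}, C p.1 ⥤ D p)
variable (θ : ∀ p : {v : V // v ≠ v₀}, C v₀ ⥤ D p)

/-- An object of the gluing category: a family `(F_v)_{v ∈ V}` of objects `F_v ∈ C_v`
(the component at the distinguished index `v₀` is `gen`, the components at `v ≠ v₀`
are `fib`), together with morphisms `f_v : q_v*(F_v) ⟶ θ_v*(F_{v₀})` in `D_v`. -/
structure Glued where
  gen : C v₀
  fib : ∀ p : {v : V // v ≠ v₀}, C p.1
  spec : ∀ p : {v : V // v ≠ v₀}, (q p).obj (fib p) ⟶ (θ p).obj gen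

namespace Glued

variable {v₀ C D q θ}

/-- A morphism in the gluing category: a family of componentwise morphisms compatible
with the structure maps. -/
@[ext]
structure Hom (F G : Glued v₀ C D q θ) where
  appGen : F.gen ⟶ G.gen
  appFib : ∀ p, F.fib p ⟶ G.fib p
  comm : ∀ p, F.spec p ≫ (θ p).map appGen = (q p).map (appFib p) ≫ G.spec p := by
    aesop_cat

instance : Category (Glued v₀ C D q θ) where
  Hom F G := Hom F G
  id F := { appGen := 𝟙 _, appFib := fun _ => 𝟙 _, comm := by simp }
  comp f g :=
    { appGen := f.appGen ≫ g.appGen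
      appFib := fun p => f.appFib p ≫ g.appFib p
      comm := fun p => by
        rw [Functor.map_comp, Functor.map_comp, ← Category.assoc, f.comm p,
          Category.assoc, g.comm p, Category.assoc] }
  id_comp f := by apply Hom.ext <;> simp
  comp_id f := by apply Hom.ext <;> simp
  assoc f g h := by apply Hom.ext <;> simp

/-- The evaluation functor at the distinguished index `v₀`. -/
@[simps]
def evalGen : Glued v₀ C D q θ ⥤ C v₀ where
  obj F := F.gen
  map f := f.appGen

/-- The evaluation functor at an index `v ≠ v₀`. -/
@[simps]
def evalFib (p : {v : V // v ≠ v₀}) : Glued v₀ C D q θ ⥤ C p.1 where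
  obj F := F.fib p
  map f := f.appFib p

@[simp] theorem id_appGen (F : Glued v₀ C D q θ) : Hom.appGen (𝟙 F) = 𝟙 F.gen := rfl

@[simp] theorem id_appFib (F : Glued v₀ C D q θ) (p : {v : V // v ≠ v₀}) :
    Hom.appFib (𝟙 F) p = 𝟙 (F.fib p) := rfl

@[simp] theorem comp_appGen {F G H : Glued v₀ C D q θ} (f : F ⟶ G) (g : G ⟶ H) :
    Hom.appGen (f ≫ g) = Hom.appGen f ≫ Hom.appGen g := rfl

@[simp] theorem comp_appFib {F G H : Glued v₀ C D q θ} (f : F ⟶ G) (g : G ⟶ H)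
    (p : {v : V // v ≠ v₀}) :
    Hom.appFib (f ≫ g) p = Hom.appFib f p ≫ Hom.appFib g p := rfl

end Glued

variable [∀ v, HasTerminal (C v)]
variable [∀ p, HasTerminal (D p)]
variable [∀ p, PreservesLimit (Functor.empty.{0} (C p.1)) (q p)]
variable [∀ p, PreservesLimit (Functor.empty.{0} (C v₀)) (θ p)]
variable (p₀ : {v : V // v ≠ v₀})

namespace Glued

/-- The auxiliary functor `C_{p₀} ⥤ C_p` used by the direct image of a closed point:
the identity when `p = p₀`, and the constant functor with value the terminal object
otherwise. -/
noncomputable def fibFunctor (p : {v : V // v ≠ v₀}) : C p₀.1 ⥤ C p.1 := by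
  by_cases h : p = p₀
  · subst h; exact 𝟭 _
  · exact (Functor.const (C p₀.1)).obj (⊤_ (C p.1))

/-- `i_{p₀ *} : C_{p₀} ⥤ F`, the direct image of the closed point `p₀`: the
`p₀`-component of `i_{p₀ *} X` is `X`, every other component is the terminal object,
and the structure maps are the unique maps into terminal objects (using that `q` and
`θ` preserve terminal objects). -/
noncomputable def iStar : C p₀.1 ⥤ Glued v₀ C D q θ where
  obj X :=
    { gen := ⊤_ (C v₀)
      fib := fun p => (fibFunctor v₀ C p₀ p).obj X
      spec := fun p => (terminalIsTerminal.isTerminalObj (θ p)).from _ }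
  map φ :=
    { appGen := 𝟙 _
      appFib := fun p => (fibFunctor v₀ C p₀ p).map φ
      comm := fun p => (terminalIsTerminal.isTerminalObj (θ p)).hom_ext _ _ }
  map_id X := Hom.ext rfl (funext fun p => by simp)
  map_comp φ ψ := Hom.ext (by simp) (funext fun p => by simp)

set_option linter.unusedSectionVars false

theorem fibFunctor_self : Glued.fibFunctor v₀ C p₀ p₀ = 𝟭 (C p₀.1) := by
  simp [Glued.fibFunctor]

theorem fibFunctor_ne {p : {v : V // v ≠ v₀}} (h : p ≠ p₀) :
    Glued.fibFunctor v₀ C p₀ p = (Functor.const (C p₀.1)).obj (⊤_ (C p.1)) := by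
  simp [Glued.fibFunctor, h]

/-- For `p ≠ p₀`, the value of `fibFunctor` is terminal. -/
noncomputable def fibTerminal {p : {v : V // v ≠ v₀}} (h : p ≠ p₀) (X : C p₀.1) :
    IsTerminal ((Glued.fibFunctor v₀ C p₀ p).obj X) := by
  rw [fibFunctor_ne v₀ C p₀ h]
  exact terminalIsTerminal

theorem fibFunctor_self_obj (X : C p₀.1) :
    (Glued.fibFunctor v₀ C p₀ p₀).obj X = X := by rw [fibFunctor_self]; rfl

/-- The component of the unit at an index `p`. -/
noncomputable def unitFib (F : Glued v₀ C D q θ) (p : {v : V // v ≠ v₀}) :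
    F.fib p ⟶ (Glued.fibFunctor v₀ C p₀ p).obj (F.fib p₀) := by
  by_cases h : p = p₀
  · subst h; exact eqToHom (fibFunctor_self_obj v₀ C p (F.fib p)).symm
  · exact (fibTerminal v₀ C p₀ h _).from _

theorem unitFib_self (F : Glued v₀ C D q θ) :
    unitFib v₀ C D q θ p₀ F p₀ =
      eqToHom (fibFunctor_self_obj v₀ C p₀ (F.fib p₀)).symm := by
  simp [unitFib]

theorem iStar_comp_evalFib :
    Glued.iStar v₀ C D q θ p₀ ⋙ Glued.evalFib p₀ = 𝟭 (C p₀.1) :=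
  fibFunctor_self v₀ C p₀

/-- The adjunction `evalFib p₀ ⊣ iStar p₀`. -/
noncomputable def evalFibAdj :
    Glued.evalFib (v₀ := v₀) (C := C) (D := D) (q := q) (θ := θ) p₀ ⊣
      Glued.iStar v₀ C D q θ p₀ where
  unit :=
    { app := fun F =>
        { appGen := terminal.from _
          appFib := fun p => unitFib v₀ C D q θ p₀ F p
          comm := fun p => (terminalIsTerminal.isTerminalObj (θ p)).hom_ext _ _ }
      naturality := fun F G f => by
        apply Glued.Hom.ext
        · exact terminal.hom_ext _ _
        · funext p
          by_cases h : p = p₀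
          · subst h
            show f.appFib p ≫ unitFib v₀ C D q θ p G p =
              unitFib v₀ C D q θ p F p ≫
                (Glued.fibFunctor v₀ C p p).map (f.appFib p)
            rw [unitFib_self, unitFib_self,
              Functor.congr_hom (fibFunctor_self v₀ C p) (f.appFib p)]
            simp
          · exact (fibTerminal v₀ C p₀ h _).hom_ext _ _ }
  counit := eqToHom (iStar_comp_evalFib v₀ C D q θ p₀)
  left_triangle_components F := by
    show unitFib v₀ C D q θ p₀ F p₀ ≫ _ = _
    rw [unitFib_self, eqToHom_app]
    exact (eqToHom_trans _ _).trans (eqToHom_refl _ _)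
  right_triangle_components X := by
    apply Glued.Hom.ext
    · exact terminal.hom_ext _ _
    · funext p
      by_cases h : p = p₀
      · subst h
        simp only [Glued.comp_appFib, Glued.id_appFib]
        show unitFib v₀ C D q θ p ((Glued.iStar v₀ C D q θ p).obj X) p ≫ (Glued.fibFunctor v₀ C p p).map ((eqToHom (iStar_comp_evalFib v₀ C D q θ p)).app X) = 𝟙 _
        rw [unitFib_self]
        refine (congrArg (eqToHom _ ≫ ·) (Functor.congr_hom (fibFunctor_self v₀ C p) ((eqToHom (iStar_comp_evalFib v₀ C D q θ p)).app X))).trans ?_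
        simp [eqToHom_app]
        exact (eqToHom_trans _ _).trans (eqToHom_refl _ _)
      · exact (fibTerminal v₀ C p₀ h _).hom_ext _ _

end Glued

/-- `i_{p₀ *}` is right adjoint to the evaluation functor `i_{p₀}^* : F ⥤ C_{p₀}`,
the comparison morphism of the adjunction between `i_{p₀}^* ∘ i_{p₀ *}` and the
identity of `C_{p₀}` (the counit, i.e. the inverse direction of the unit
`id → i_{p₀}^* ∘ i_{p₀ *}` of the paper) is an isomorphism, and hence `i_{p₀ *}` is
fully faithful. -/
theorem Glued.iStar_rightAdjoint_counit_isIso :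
    (∃ a : Glued.evalFib (v₀ := v₀) (C := C) (D := D) (q := q) (θ := θ) p₀ ⊣
        Glued.iStar v₀ C D q θ p₀, IsIso a.counit) ∧
      (Glued.iStar v₀ C D q θ p₀).Full ∧ (Glued.iStar v₀ C D q θ p₀).Faithful := by
  let adj := Glued.evalFibAdj v₀ C D q θ p₀
  have hiso : IsIso adj.counit := by
    show IsIso (eqToHom (Glued.iStar_comp_evalFib v₀ C D q θ p₀))
    infer_instance
  have ff := adj.fullyFaithfulROfIsIsoCounit
  exact ⟨⟨adj, hiso⟩, ff.full, ff.faithful⟩
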